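/- Let 𝒳 and 𝒴 be standard Borel spaces, P_X a probability measure on 𝒳, 𝖽 : 𝒳 × 𝒴 → [0,∞] jointly measurable, d ≥ 0, and M a positive integer. For any probability measure P_Y on 𝒴 there exist measurable maps f : 𝒳 → {1,…,M} and g : {1,…,M} → 𝒴 such that P_X( { x : 𝖽(x, g(f(x))) > d } ) ≤ ∫ exp( −M · P_Y(𝓑(x,d)) ) dP_X(x), where 𝓑(x,d) = { y ∈ 𝒴 : 𝖽(x,y) ≤ d } is the distortion d-ball centered at x. (Random-coding achievability bound; Lemma 4 of the paper, Corollary 11 of Kostina–Verdú.) -/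

import Mathlib

open MeasureTheory
open scoped ENNReal

set_option maxHeartbeats 1000000

def oldFind {n : ℕ} (p : Fin n → Prop) [DecidablePred p] : Option (Fin n) :=
  Fin.find? (fun i => decide (p i))

theorem oldFind_eq_none_iff {n : ℕ} {p : Fin n → Prop} [DecidablePred p] :
    oldFind p = none ↔ ∀ i, ¬ p i := by
  simp [oldFind, Fin.find?_eq_none_iff]

theorem oldFind_eq_some_iff {n : ℕ} {p : Fin n → Prop} [DecidablePred p] {i : Fin n} :
    oldFind p = some i ↔ p i ∧ ∀ j, p j → i ≤ j := by
  simp only [oldFind, Fin.find?_eq_some_iff, decide_eq_true_eq, decide_eq_false_iff_not]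
  constructor
  · rintro ⟨h1, h2⟩
    exact ⟨h1, fun j hj => not_lt.mp fun hlt => h2 j hlt hj⟩
  · rintro ⟨h1, h2⟩
    exact ⟨h1, fun j hlt hj => absurd (h2 j hj) (not_le.mpr hlt)⟩

theorem isSome_oldFind_iff {n : ℕ} {p : Fin n → Prop} [DecidablePred p] :
    (oldFind p).isSome ↔ ∃ i, p i := by
  simp [oldFind, Fin.isSome_find?_iff]

theorem oldFind_spec {n : ℕ} (p : Fin n → Prop) [DecidablePred p] {i : Fin n}
    (hi : i ∈ oldFind p) : p i :=
  (oldFind_eq_some_iff.mp hi).1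

/-- Random-coding achievability bound (Lemma 4; Kostina–Verdú Cor. 11): for any
reproduction distribution `P_Y` there is an `(M,d)` code whose excess-distortion
probability is at most `E_X[exp(−M · P_Y(B(X,d)))]`. -/
theorem random_coding_bound
    {α β : Type*} [MeasurableSpace α] [MeasurableSpace β]
    [StandardBorelSpace α] [StandardBorelSpace β]
    (μ : Measure α) [IsProbabilityMeasure μ]
    (dist : α → β → ℝ≥0∞) (hmeas : Measurable (Function.uncurry dist))
    (d : ℝ≥0∞) (M : ℕ) (hM : 0 < M)
    (ν : Measure β) [IsProbabilityMeasure ν] :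
    ∃ (f : α → Fin M) (g : Fin M → β), Measurable f ∧ Measurable g ∧
      (μ {x | d < dist x (g (f x))}).toReal ≤
        ∫ x, Real.exp (-(M : ℝ) * (ν {y | dist x y ≤ d}).toReal) ∂μ := by
  classical
  set i0 : Fin M := ⟨0, hM⟩
  set p : α → ℝ≥0∞ := fun x => ν {y | dist x y ≤ d} with hp
  -- measurability of the ball probability
  have hDmeas : MeasurableSet {q : α × β | dist q.1 q.2 ≤ d} :=
    hmeas measurableSet_Iic
  have hp_meas : Measurable p := by
    have h := measurable_measure_prodMk_left (ν := ν) hDmeas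
    convert h using 2 with x
    rfl
  -- the codebook space
  set π : Measure (Fin M → β) := Measure.pi (fun _ => ν) with hπ
  -- the "no codeword within distance d" set
  set A : (Fin M → β) → Set α := fun c => {x | ∀ i, d < dist x (c i)} with hA
  have hT : MeasurableSet {q : (Fin M → β) × α | ∀ i, d < dist q.2 (q.1 i)} := by
    have : {q : (Fin M → β) × α | ∀ i, d < dist q.2 (q.1 i)}
        = ⋂ i, {q : (Fin M → β) × α | d < dist q.2 (q.1 i)} := by
      ext q; simp
    rw [this]
    refine MeasurableSet.iInter fun i => ?_
    have hmi : Measurable fun q : (Fin M → β) × α => dist q.2 (q.1 i) :=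
      hmeas.comp (measurable_snd.prodMk ((measurable_pi_apply i).comp measurable_fst))
    exact measurableSet_lt measurable_const hmi
  have hAmeas : ∀ c, MeasurableSet (A c) := fun c =>
    measurable_prodMk_left hT
  have hF_meas : Measurable fun c => μ (A c) := by
    have h := measurable_measure_prodMk_left (ν := μ) hT
    convert h using 2 with c
    rfl
  -- Tonelli: average of μ (A c) over random codebooks
  have key : ∫⁻ c, μ (A c) ∂π = ∫⁻ x, (1 - p x) ^ M ∂μ := by
    have h1 : ∀ c, μ (A c) = ∫⁻ x, Set.indicator
        {q : (Fin M → β) × α | ∀ i, d < dist q.2 (q.1 i)} 1 (c, x) ∂μ := by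
      intro c
      rw [show (fun x => Set.indicator
          {q : (Fin M → β) × α | ∀ i, d < dist q.2 (q.1 i)} 1 (c, x))
          = (A c).indicator (1 : α → ℝ≥0∞) by
        funext x; simp only [Set.indicator_apply]; rfl]
      rw [lintegral_indicator_one (hAmeas c)]
    have h2 : ∫⁻ c, μ (A c) ∂π
        = ∫⁻ x, ∫⁻ c, Set.indicator
          {q : (Fin M → β) × α | ∀ i, d < dist q.2 (q.1 i)} 1 (c, x) ∂π ∂μ := by
      simp_rw [h1]
      exact lintegral_lintegral_swap ((measurable_const.indicator hT).aemeasurable)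
    rw [h2]
    congr 1
    funext x
    have h3 : (fun c : Fin M → β => Set.indicator
        {q : (Fin M → β) × α | ∀ i, d < dist q.2 (q.1 i)} 1 (c, x))
        = Set.indicator {c : Fin M → β | ∀ i, d < dist x (c i)} (1 : (Fin M → β) → ℝ≥0∞) := by
      funext c; simp only [Set.indicator_apply]; rfl
    have hsx : MeasurableSet {c : Fin M → β | ∀ i, d < dist x (c i)} := by
      have : {c : Fin M → β | ∀ i, d < dist x (c i)}
          = Set.pi Set.univ (fun _ : Fin M => {y | d < dist x y}) := by
        ext c; simp [Set.mem_pi]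
      rw [this]
      refine MeasurableSet.univ_pi fun i => ?_
      exact measurableSet_lt measurable_const (hmeas.comp measurable_prodMk_left)
    rw [h3, lintegral_indicator_one hsx]
    have h4 : {c : Fin M → β | ∀ i, d < dist x (c i)}
        = Set.pi Set.univ (fun _ : Fin M => {y | d < dist x y}) := by
      ext c; simp [Set.mem_pi]
    rw [h4, hπ, Measure.pi_pi]
    have h5 : {y | d < dist x y} = {y | dist x y ≤ d}ᶜ := by
      ext y; simp [not_le]
    have hBx : MeasurableSet {y | dist x y ≤ d} :=
      (hmeas.comp measurable_prodMk_left) measurableSet_Iic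
    rw [h5, measure_compl hBx (measure_ne_top _ _)]
    simp [hp, Finset.prod_const, measure_univ]
  -- pointwise bound (1-p)^M ≤ exp(-M p)
  have hpt : ∀ x, (1 - p x) ^ M ≤ ENNReal.ofReal (Real.exp (-(M : ℝ) * (p x).toReal)) := by
    intro x
    have hple : p x ≤ 1 := prob_le_one
    have hpne : p x ≠ ∞ := (lt_of_le_of_lt hple ENNReal.one_lt_top).ne
    set t := (p x).toReal with ht
    have ht0 : 0 ≤ t := ENNReal.toReal_nonneg
    have ht1 : t ≤ 1 := by
      have := ENNReal.toReal_mono (by norm_num) hple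
      simpa using this
    have h1 : (1 : ℝ≥0∞) - p x = ENNReal.ofReal (1 - t) := by
      rw [ENNReal.ofReal_sub _ ht0, ENNReal.ofReal_one, ENNReal.ofReal_toReal hpne]
    rw [h1, ← ENNReal.ofReal_pow (by linarith)]
    apply ENNReal.ofReal_le_ofReal
    have hle : 1 - t ≤ Real.exp (-t) := by
      have := Real.add_one_le_exp (-t)
      linarith
    calc (1 - t) ^ M ≤ Real.exp (-t) ^ M :=
          pow_le_pow_left₀ (by linarith) hle M
      _ = Real.exp (-(M : ℝ) * t) := by
          rw [show -(M : ℝ) * t = (M : ℕ) * (-t) by push_cast; ring, Real.exp_nat_mul]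
  -- the exponential integrand
  set h : α → ℝ := fun x => Real.exp (-(M : ℝ) * (p x).toReal) with hh
  have hh_meas' : Measurable h := by
    apply Real.measurable_exp.comp
    exact measurable_const.mul hp_meas.ennreal_toReal
  have hh_int : Integrable h μ := by
    refine Integrable.mono' (integrable_const (1 : ℝ)) hh_meas'.aestronglyMeasurable ?_
    refine ae_of_all _ fun x => ?_
    rw [Real.norm_eq_abs, abs_of_pos (Real.exp_pos _)]
    rw [Real.exp_le_one_iff]
    have : (0:ℝ) ≤ (M : ℝ) * (p x).toReal :=
      mul_nonneg (by positivity) ENNReal.toReal_nonneg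
    linarith
  have hh_nonneg : 0 ≤ᵐ[μ] h := ae_of_all _ fun x => (Real.exp_pos _).le
  -- average bound
  have havg : ∫⁻ c, μ (A c) ∂π ≤ ENNReal.ofReal (∫ x, h x ∂μ) := by
    rw [key, ofReal_integral_eq_lintegral_ofReal hh_int hh_nonneg]
    exact lintegral_mono fun x => hpt x
  have hfin : ∫⁻ c, μ (A c) ∂π ≠ ∞ :=
    (lt_of_le_of_lt havg ENNReal.ofReal_lt_top).ne
  -- pick a good codebook
  have : IsProbabilityMeasure π := by rw [hπ]; infer_instance
  obtain ⟨c, hc⟩ := exists_le_lintegral (μ := π) hF_meas.aemeasurable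
  have hcbound : μ (A c) ≤ ENNReal.ofReal (∫ x, h x ∂μ) := le_trans hc havg
  -- construct the encoder
  set f : α → Fin M := fun x => (oldFind (fun i => dist x (c i) ≤ d)).getD i0 with hf
  have hf_meas : Measurable f := by
    apply measurable_to_countable'
    intro i
    have hSj : ∀ j : Fin M, MeasurableSet {x | dist x (c j) ≤ d} := fun j =>
      (hmeas.comp (measurable_id.prodMk measurable_const)) measurableSet_Iic
    have hEmeas : ∀ k : Fin M,
        MeasurableSet {x | dist x (c k) ≤ d ∧ ∀ j, dist x (c j) ≤ d → k ≤ j} := by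
      intro k
      have hrw : {x | dist x (c k) ≤ d ∧ ∀ j, dist x (c j) ≤ d → k ≤ j}
          = {x | dist x (c k) ≤ d} ∩ ⋂ j, {x | dist x (c j) ≤ d → k ≤ j} := by
        ext x; simp [Set.mem_iInter]
      rw [hrw]
      refine (hSj k).inter (MeasurableSet.iInter fun j => ?_)
      by_cases hkj : k ≤ j
      · have : {x | dist x (c j) ≤ d → k ≤ j} = Set.univ := by
          ext x; simp [hkj]
        rw [this]; exact MeasurableSet.univ
      · have : {x | dist x (c j) ≤ d → k ≤ j} = {x | dist x (c j) ≤ d}ᶜ := by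
          ext x; simp [hkj]
        rw [this]; exact (hSj j).compl
    have hNmeas : MeasurableSet (⋂ j, {x | dist x (c j) ≤ d}ᶜ) :=
      MeasurableSet.iInter fun j => (hSj j).compl
    have hpre : f ⁻¹' {i} = if i = i0 then
        ({x | dist x (c i) ≤ d ∧ ∀ j, dist x (c j) ≤ d → i ≤ j}
          ∪ ⋂ j, {x | dist x (c j) ≤ d}ᶜ)
        else {x | dist x (c i) ≤ d ∧ ∀ j, dist x (c j) ≤ d → i ≤ j} := by
      ext x
      simp only [Set.mem_preimage, Set.mem_singleton_iff, hf]
      rcases hfind : oldFind (fun j => dist x (c j) ≤ d) with _ | j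
      · rw [oldFind_eq_none_iff] at hfind
        simp only [Option.getD_none]
        constructor
        · rintro rfl
          simp only [if_pos rfl, Set.mem_union]
          right
          simp only [Set.mem_iInter, Set.mem_compl_iff, Set.mem_setOf_eq]
          exact hfind
        · intro hx
          by_cases hi : i = i0
          · exact hi.symm
          · rw [if_neg hi] at hx
            exact absurd hx.1 (hfind i)
      · have hj := oldFind_eq_some_iff.mp hfind
        simp only [Option.getD_some]
        constructor
        · intro hji
          rw [← hji]
          by_cases hj0 : j = i0
          · rw [if_pos hj0]
            exact Or.inl ⟨hj.1, hj.2⟩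
          · rw [if_neg hj0]
            exact ⟨hj.1, hj.2⟩
        · intro hx
          have hxE : dist x (c i) ≤ d ∧ ∀ k, dist x (c k) ≤ d → i ≤ k := by
            by_cases hi : i = i0
            · rw [if_pos hi] at hx
              rcases hx with hx | hx
              · exact hx
              · exact absurd hj.1 (by
                  simp only [Set.mem_iInter, Set.mem_compl_iff, Set.mem_setOf_eq] at hx
                  exact hx j)
            · rwa [if_neg hi] at hx
          exact le_antisymm (hj.2 i hxE.1) (hxE.2 j hj.1)
    rw [hpre]
    split_ifs
    · exact (hEmeas i).union hNmeas
    · exact hEmeas i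
  refine ⟨f, c, hf_meas, measurable_of_countable c, ?_⟩
  -- excess distortion set is contained in A c
  have hsub : {x | d < dist x (c (f x))} ⊆ A c := by
    intro x hx
    simp only [hA, Set.mem_setOf_eq]
    intro i
    by_contra hcon
    push_neg at hcon
    have hsome : (oldFind (fun j => dist x (c j) ≤ d)).isSome :=
      isSome_oldFind_iff.mpr ⟨i, hcon⟩
    rcases Option.isSome_iff_exists.mp hsome with ⟨j, hj⟩
    have hpj : dist x (c j) ≤ d := oldFind_spec _ hj
    have hfx : f x = j := by simp [hf, hj]
    simp only [Set.mem_setOf_eq] at hx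
    rw [hfx] at hx
    exact absurd hpj (not_le.mpr hx)
  have hmono : μ {x | d < dist x (c (f x))} ≤ μ (A c) := measure_mono hsub
  have hfinal : μ {x | d < dist x (c (f x))} ≤ ENNReal.ofReal (∫ x, h x ∂μ) :=
    le_trans hmono hcbound
  calc (μ {x | d < dist x (c (f x))}).toReal
      ≤ (ENNReal.ofReal (∫ x, h x ∂μ)).toReal :=
        ENNReal.toReal_mono ENNReal.ofReal_ne_top hfinal
    _ = ∫ x, h x ∂μ := ENNReal.toReal_ofReal (integral_nonneg fun x => (Real.exp_pos _).le)
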